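/- Let G be a finite graph with arboricity a > 0 and n vertices, and ε a real with 0 < ε ≤ 2. Define a sequence of induced subgraphs G_0 = G, and G_{i+1} = the subgraph of G_i induced by vertices of degree (in G_i) greater than (2+ε)·a. Then G_i has at most (2/(2+ε))^i · n vertices. -/

import Mathlib

open Finset
open scoped Classical

/-- `G` admits a partition of its edge set into at most `a` forests. -/
def HasForestDecomp {V : Type*} (G : SimpleGraph V) (a : ℕ) : Prop :=
  ∃ F : Fin a → SimpleGraph V,
    (∀ i, F i ≤ G ∧ (F i).IsAcyclic) ∧
    ∀ e ∈ G.edgeSet, ∃! i, e ∈ (F i).edgeSet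

/-- The arboricity of a graph: the minimum number of forests partitioning its edge set. -/
noncomputable def arboricity {V : Type*} (G : SimpleGraph V) : ℕ :=
  sInf {a | HasForestDecomp G a}

/-- `peel G a ε i` is the vertex set of the graph `G_i`: `G_0 = G`, and `G_{i+1}` is the
subgraph of `G_i` induced by the vertices whose degree in `G_i` exceeds `(2+ε)·a`. -/
noncomputable def peel {V : Type*} [Fintype V] (G : SimpleGraph V) (a : ℕ) (ε : ℝ) :
    ℕ → Finset V
  | 0 => Finset.univ
  | (i + 1) => (peel G a ε i).filter
      (fun v => (2 + ε) * a < (((peel G a ε i).filter (fun u => G.Adj v u)).card : ℝ))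

section AuxLemmas

variable {V : Type*}


lemma concat_isPath {G : SimpleGraph V} {u v w : V} {p : G.Walk u v} (hp : p.IsPath)
    (h : G.Adj v w) (hw : w ∉ p.support) : (p.concat h).IsPath := by
  have h1 : (SimpleGraph.Walk.cons h.symm p.reverse).IsPath := by
    rw [SimpleGraph.Walk.cons_isPath_iff]
    exact ⟨hp.reverse, by simpa using hw⟩
  have h2 := h1.reverse
  simpa [SimpleGraph.Walk.reverse_cons, SimpleGraph.Walk.concat_eq_append] using h2

lemma not_end_mem_takeUntil {G : SimpleGraph V} [DecidableEq V] {u w y : V} {p : G.Walk u w}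
    (hp : p.IsPath) (hy : y ∈ p.support) (hne : y ≠ w) :
    w ∉ (p.takeUntil y hy).support := by
  intro hw
  have hspec := p.take_spec hy
  have hnd : p.support.Nodup := hp.support_nodup
  rw [← hspec, SimpleGraph.Walk.support_append] at hnd
  have hdisj := List.disjoint_of_nodup_append hnd
  have hwd : w ∈ (p.dropUntil y hy).support.tail := by
    have hend : w ∈ (p.dropUntil y hy).support := SimpleGraph.Walk.end_mem_support _
    rw [SimpleGraph.Walk.support_eq_cons, List.mem_cons] at hend
    rcases hend with h | h
    · exact absurd h.symm hne
    · exact h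
  exact hdisj hw hwd

lemma exists_low_deg {G : SimpleGraph V} [Fintype V] [DecidableEq V] [DecidableRel G.Adj]
    (hG : G.IsAcyclic) {S : Finset V} (hS : S.Nonempty) :
    ∃ v ∈ S, (S.filter (G.Adj v)).card ≤ 1 := by
  by_contra hcon
  push_neg at hcon
  have hdeg : ∀ v ∈ S, 2 ≤ (S.filter (G.Adj v)).card := fun v hv => hcon v hv
  have claim : ∀ n : ℕ, ∃ (u w : V) (p : G.Walk u w),
      p.IsPath ∧ (∀ z ∈ p.support, z ∈ S) ∧ p.length = n := by
    intro n
    induction n with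
    | zero =>
      obtain ⟨v, hv⟩ := hS
      exact ⟨v, v, SimpleGraph.Walk.nil, by simp, by simpa using hv, rfl⟩
    | succ n ih =>
      obtain ⟨u, w, p, hp, hsup, hlen⟩ := ih
      have hwS : w ∈ S := hsup w (SimpleGraph.Walk.end_mem_support p)
      have hT : 2 ≤ (S.filter (G.Adj w)).card := hdeg w hwS
      by_cases hex : ∃ y ∈ S.filter (G.Adj w), y ∉ p.support
      · obtain ⟨y, hyT, hyp⟩ := hex
        obtain ⟨hyS, hadj⟩ := Finset.mem_filter.mp hyT
        refine ⟨u, y, p.concat hadj, concat_isPath hp hadj hyp, ?_, ?_⟩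
        · intro z hz
          rw [SimpleGraph.Walk.support_concat, List.mem_append] at hz
          rcases hz with h | h
          · exact hsup z h
          · simp only [List.mem_singleton] at h
            exact h ▸ hyS
        · rw [SimpleGraph.Walk.length_concat, hlen]
      · push_neg at hex
        exfalso
        obtain ⟨y₁, hy₁T, y₂, hy₂T, hne⟩ := Finset.one_lt_card.mp (lt_of_lt_of_le one_lt_two hT)
        have hadj₁ : G.Adj w y₁ := (Finset.mem_filter.mp hy₁T).2
        have hadj₂ : G.Adj w y₂ := (Finset.mem_filter.mp hy₂T).2
        have hy₁p : y₁ ∈ p.support := hex y₁ hy₁T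
        have hy₂p : y₂ ∈ p.support := hex y₂ hy₂T
        have hn₁ : y₁ ≠ w := hadj₁.ne'
        have hn₂ : y₂ ≠ w := hadj₂.ne'
        have hw₁ := not_end_mem_takeUntil hp hy₁p hn₁
        have hw₂ := not_end_mem_takeUntil hp hy₂p hn₂
        set q₁ := p.takeUntil y₁ hy₁p with hq₁
        set q₂ := p.takeUntil y₂ hy₂p with hq₂
        have hr₁ : (q₁.concat hadj₁.symm).IsPath :=
          concat_isPath (hp.takeUntil hy₁p) hadj₁.symm hw₁
        have hr₂ : (q₂.concat hadj₂.symm).IsPath :=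
          concat_isPath (hp.takeUntil hy₂p) hadj₂.symm hw₂
        have heq : q₁.concat hadj₁.symm = q₂.concat hadj₂.symm := by
          have := hG.path_unique ⟨q₁.concat hadj₁.symm, hr₁⟩ ⟨q₂.concat hadj₂.symm, hr₂⟩
          exact congrArg Subtype.val this
        have hmem : s(y₁, w) ∈ (q₂.concat hadj₂.symm).edges := by
          rw [← heq, SimpleGraph.Walk.edges_concat]
          rw [List.concat_eq_append, List.mem_append]
          exact Or.inr (List.mem_singleton.mpr rfl)
        rw [SimpleGraph.Walk.edges_concat, List.concat_eq_append, List.mem_append] at hmem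
        rcases hmem with h | h
        · exact hw₂ (SimpleGraph.Walk.snd_mem_support_of_mem_edges q₂ h)
        · rw [List.mem_singleton, Sym2.eq_iff] at h
          rcases h with ⟨h1, _⟩ | ⟨h1, h2⟩
          · exact hne h1
          · exact hn₁ h1
  obtain ⟨u, w, p, hp, _, hlen⟩ := claim (Fintype.card V)
  exact absurd hp.length_lt (by omega)

lemma acyclic_sum_deg {G : SimpleGraph V} [Fintype V] [DecidableEq V] [DecidableRel G.Adj]
    (hG : G.IsAcyclic) (S : Finset V) :
    ∑ v ∈ S, (S.filter (G.Adj v)).card ≤ 2 * S.card := by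
  induction S using Finset.strongInductionOn with
  | _ S ih =>
    rcases S.eq_empty_or_nonempty with rfl | hS
    · simp
    obtain ⟨v, hvS, hv1⟩ := exists_low_deg hG hS
    set S' := S.erase v with hS'def
    have hins : insert v S' = S := Finset.insert_erase hvS
    have hsub : S' ⊂ S := Finset.erase_ssubset hvS
    have hstep : ∀ u, (S.filter (G.Adj u)).card ≤
        (S'.filter (G.Adj u)).card + (if G.Adj u v then 1 else 0) := by
      intro u
      conv_lhs => rw [← hins]
      rw [Finset.filter_insert]
      split
      · exact le_trans (Finset.card_insert_le _ _) (by omega)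
      · omega
    have h1 : ∑ u ∈ S, (S.filter (G.Adj u)).card
        = (S.filter (G.Adj v)).card + ∑ u ∈ S', (S.filter (G.Adj u)).card :=
      (Finset.add_sum_erase S _ hvS).symm
    have h2 : ∑ u ∈ S', (S.filter (G.Adj u)).card
        ≤ ∑ u ∈ S', (S'.filter (G.Adj u)).card + ∑ u ∈ S', (if G.Adj u v then 1 else 0) := by
      rw [← Finset.sum_add_distrib]
      exact Finset.sum_le_sum fun u _ => hstep u
    have h3 : ∑ u ∈ S', (if G.Adj u v then 1 else 0) = (S'.filter (fun u => G.Adj u v)).card :=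
      (Finset.card_filter _ _).symm
    have h4 : (S'.filter (fun u => G.Adj u v)).card ≤ 1 := by
      refine le_trans (Finset.card_le_card ?_) hv1
      intro u hu
      rw [Finset.mem_filter] at hu ⊢
      exact ⟨Finset.mem_of_mem_erase hu.1, hu.2.symm⟩
    have h5 := ih S' hsub
    have h6 : S'.card + 1 = S.card := by
      rw [hS'def, Finset.card_erase_of_mem hvS]
      have := Finset.card_pos.mpr hS
      omega
    omega

lemma graph_sum_deg {G : SimpleGraph V} [Fintype V] [DecidableEq V] [DecidableRel G.Adj]
    {a : ℕ} (hd : HasForestDecomp G a) (S : Finset V) :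
    ∑ v ∈ S, (S.filter (G.Adj v)).card ≤ 2 * a * S.card := by
  obtain ⟨F, hF, huniq⟩ := hd
  have key : ∀ v, (S.filter (G.Adj v)).card ≤ ∑ j : Fin a, (S.filter ((F j).Adj v)).card := by
    intro v
    have hsub : S.filter (G.Adj v) ⊆ Finset.univ.biUnion (fun j => S.filter ((F j).Adj v)) := by
      intro u hu
      rw [Finset.mem_filter] at hu
      obtain ⟨j, hj, _⟩ := huniq s(v, u) ((SimpleGraph.mem_edgeSet G).mpr hu.2)
      exact Finset.mem_biUnion.mpr ⟨j, Finset.mem_univ j,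
        Finset.mem_filter.mpr ⟨hu.1, (SimpleGraph.mem_edgeSet (F j)).mp hj⟩⟩
    exact le_trans (Finset.card_le_card hsub) (Finset.card_biUnion_le)
  calc ∑ v ∈ S, (S.filter (G.Adj v)).card
      ≤ ∑ v ∈ S, ∑ j : Fin a, (S.filter ((F j).Adj v)).card :=
        Finset.sum_le_sum fun v _ => key v
    _ = ∑ j : Fin a, ∑ v ∈ S, (S.filter ((F j).Adj v)).card := Finset.sum_comm
    _ ≤ ∑ _j : Fin a, 2 * S.card :=
        Finset.sum_le_sum fun j _ => acyclic_sum_deg (hF j).2 S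
    _ = 2 * a * S.card := by
        rw [Finset.sum_const, Finset.card_univ, Fintype.card_fin, smul_eq_mul]; ring

end AuxLemmas

/-- For a finite graph `G` with arboricity `a > 0` on `n` vertices and `0 < ε ≤ 2`,
the iterated induced subgraph `G_i` (keeping only vertices of degree `> (2+ε)·a`)
has at most `(2/(2+ε))^i · n` vertices. -/
theorem stmt4 {V : Type*} [Fintype V] [DecidableEq V] (G : SimpleGraph V)
    [DecidableRel G.Adj] (a : ℕ) (ha : arboricity G = a) (hapos : 0 < a)
    (ε : ℝ) (hε0 : 0 < ε) (hε2 : ε ≤ 2) (i : ℕ) :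
    ((peel G a ε i).card : ℝ) ≤ (2 / (2 + ε)) ^ i * (Fintype.card V : ℝ) := by
  have hne : {b | HasForestDecomp G b}.Nonempty := by
    by_contra h
    rw [Set.not_nonempty_iff_eq_empty] at h
    rw [arboricity, h, Nat.sInf_empty] at ha
    omega
  have hdec : HasForestDecomp G a := ha ▸ Nat.sInf_mem hne
  have h2ε : (0:ℝ) < 2 + ε := by linarith
  induction i with
  | zero => simp [peel]
  | succ i ih =>
    set S := peel G a ε i with hSdef
    have hstep : ((peel G a ε (i+1)).card : ℝ) ≤ 2 / (2 + ε) * (S.card : ℝ) := by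
      set S' := peel G a ε (i+1) with hS'def
      have hS'sub : S' ⊆ S := Finset.filter_subset _ _
      have hbound : ∀ v ∈ S', (2 + ε) * a < ((S.filter (fun u => G.Adj v u)).card : ℝ) := by
        intro v hv
        have h := (Finset.mem_filter.mp hv).2
        rwa [Finset.filter_congr_decidable] at h
      have hsum1 : (S'.card : ℝ) * ((2 + ε) * a)
          ≤ ∑ v ∈ S', ((S.filter (fun u => G.Adj v u)).card : ℝ) := by
        have h := Finset.card_nsmul_le_sum S'
          (fun v => ((S.filter (fun u => G.Adj v u)).card : ℝ)) ((2 + ε) * a)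
          (fun v hv => le_of_lt (hbound v hv))
        simpa [nsmul_eq_mul, mul_comm] using h
      have hsum2 : ∑ v ∈ S', ((S.filter (fun u => G.Adj v u)).card : ℝ)
          ≤ ∑ v ∈ S, ((S.filter (fun u => G.Adj v u)).card : ℝ) :=
        Finset.sum_le_sum_of_subset_of_nonneg hS'sub (fun v _ _ => by positivity)
      have hsum3 : ∑ v ∈ S, ((S.filter (fun u => G.Adj v u)).card : ℝ)
          ≤ 2 * a * (S.card : ℝ) := by
        have := graph_sum_deg hdec S
        calc ∑ v ∈ S, ((S.filter (fun u => G.Adj v u)).card : ℝ)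
            = ((∑ v ∈ S, (S.filter (fun u => G.Adj v u)).card : ℕ) : ℝ) := by
              rw [Nat.cast_sum]
          _ ≤ ((2 * a * S.card : ℕ) : ℝ) := by exact_mod_cast this
          _ = 2 * a * (S.card : ℝ) := by push_cast; ring
      have key : (S'.card : ℝ) * ((2 + ε) * a) ≤ 2 * a * (S.card : ℝ) :=
        le_trans hsum1 (le_trans hsum2 hsum3)
      have hapos' : (0:ℝ) < a := by exact_mod_cast hapos
      rw [div_mul_eq_mul_div, le_div_iff₀ h2ε]
      nlinarith [key]
    calc ((peel G a ε (i+1)).card : ℝ) ≤ 2 / (2 + ε) * (S.card : ℝ) := hstep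
      _ ≤ 2 / (2 + ε) * ((2 / (2 + ε)) ^ i * (Fintype.card V : ℝ)) := by
          apply mul_le_mul_of_nonneg_left ih (by positivity)
      _ = (2 / (2 + ε)) ^ (i+1) * (Fintype.card V : ℝ) := by ring
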